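/- Let Y ⊆ (ZMod 2)^r be a finite set with 0 ∉ Y spanning (ZMod 2)^r and critical number χ(Y) = c ≥ 2, and suppose that for every linearly independent subset I ⊆ Y with |I| = r − c + 1 one has χ(Y \ I) = c. Then there is no linear subspace F of (ZMod 2)^r of codimension c − 2 such that the set Y ∩ F has a linearly independent 1-codimensional subspace. -/

import Mathlib

/-- The critical number of a spanning set `X ⊆ (ZMod 2)^n`. -/
noncomputable def critNum {n : ℕ} (X : Set (Fin n → ZMod 2)) : ℕ :=
  sInf {c : ℕ | ∃ W : Submodule (ZMod 2) (Fin n → ZMod 2),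
    Module.finrank (ZMod 2) W + c = n ∧ ∀ x ∈ X, x ∉ W}

/-- The critical number of a set `R` of vectors, relative to its own span. -/
noncomputable def relCritNum {n : ℕ} (R : Set (Fin n → ZMod 2)) : ℕ :=
  sInf {c : ℕ | ∃ W : Submodule (ZMod 2) (Fin n → ZMod 2),
    W ≤ Submodule.span (ZMod 2) R ∧
    Module.finrank (ZMod 2) W + c = Module.finrank (ZMod 2) (Submodule.span (ZMod 2) R) ∧
    ∀ x ∈ R, x ∉ W}

/-- `R` has a linearly independent 1-codimensional subspace: there is a codimension-1
subspace `F'` of `span R` such that `F' ∩ R` is linearly independent. -/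
def HasIndepHyperplane {n : ℕ} (R : Set (Fin n → ZMod 2)) : Prop :=
  ∃ F' : Submodule (ZMod 2) (Fin n → ZMod 2),
    F' ≤ Submodule.span (ZMod 2) R ∧
    Module.finrank (ZMod 2) F' + 1 = Module.finrank (ZMod 2) (Submodule.span (ZMod 2) R) ∧
    LinearIndependent (ZMod 2)
      (fun x : (↑F' ∩ R : Set (Fin n → ZMod 2)) => (x : Fin n → ZMod 2))


section AuxStmt12

open Submodule Module

theorem aux_extend {r : ℕ} (Y : Set (Fin r → ZMod 2))
    (hspan : Submodule.span (ZMod 2) Y = ⊤) (k : ℕ) (hk : k ≤ r) :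
    ∀ n (J : Set (Fin r → ZMod 2)), J ⊆ Y →
      LinearIndependent (ZMod 2) (fun x : J => (x : Fin r → ZMod 2)) →
      J.ncard + n = k →
      ∃ I, J ⊆ I ∧ I ⊆ Y ∧
        LinearIndependent (ZMod 2) (fun x : I => (x : Fin r → ZMod 2)) ∧ I.ncard = k := by
  intro n
  induction n with
  | zero => exact fun J hJY hJ hcard => ⟨J, subset_rfl, hJY, hJ, by omega⟩
  | succ n ih =>
    intro J hJY hJ hcard
    have hfin : J.Finite := hJ.setFinite
    have : Fintype J := hfin.fintype
    have hcard' : J.ncard = J.toFinset.card := Set.ncard_eq_toFinset_card' J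
    have hsp : finrank (ZMod 2) (span (ZMod 2) J) ≤ J.ncard := by
      rw [hcard']; exact finrank_span_le_card J
    have hne : span (ZMod 2) J ≠ ⊤ := by
      intro h
      rw [h, finrank_top] at hsp
      simp [Module.finrank_pi] at hsp
      omega
    obtain ⟨y, hyY, hysp⟩ : ∃ y ∈ Y, y ∉ span (ZMod 2) J := by
      by_contra h
      push_neg at h
      exact hne (top_unique (hspan ▸ span_le.mpr h))
    have hyJ : y ∉ J := fun h => hysp (subset_span h)
    obtain ⟨I, hI1, hI2, hI3, hI4⟩ :=
      ih (insert y J) (Set.insert_subset hyY hJY) (LinearIndepOn.id_insert hJ hysp)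
        (by rw [Set.ncard_insert_of_notMem hyJ hfin]; omega)
    exact ⟨I, (Set.subset_insert y J).trans hI1, hI2, hI3, hI4⟩

theorem aux_card_le {r : ℕ} {p : Submodule (ZMod 2) (Fin r → ZMod 2)}
    {J : Set (Fin r → ZMod 2)} (hJp : J ⊆ ↑p)
    (hJ : LinearIndependent (ZMod 2) (fun x : J => (x : Fin r → ZMod 2))) :
    J.ncard ≤ Module.finrank (ZMod 2) p := by
  have hfin : J.Finite := hJ.setFinite
  have : Fintype J := hfin.fintype
  rw [Set.ncard_eq_toFinset_card' J, ← finrank_span_set_eq_card hJ]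
  exact Submodule.finrank_mono (Submodule.span_le.mpr hJp)

end AuxStmt12

open Submodule Module in
theorem stmt_12 (r c : ℕ) (Y : Set (Fin r → ZMod 2)) (hc : 2 ≤ c)
    (h0 : (0 : Fin r → ZMod 2) ∉ Y) (hspan : Submodule.span (ZMod 2) Y = ⊤)
    (hchi : critNum Y = c)
    (hdel : ∀ I ⊆ Y,
      LinearIndependent (ZMod 2) (fun x : I => (x : Fin r → ZMod 2)) →
      I.ncard = r - c + 1 → relCritNum (Y \ I) = c) :
    ¬ ∃ F : Submodule (ZMod 2) (Fin r → ZMod 2),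
        Module.finrank (ZMod 2) F + (c - 2) = r ∧
        HasIndepHyperplane (Y ∩ ↑F) := by
  rintro ⟨F, hF, F', hF'le, hF'rank, hI0indep⟩
  set S : Submodule (ZMod 2) (Fin r → ZMod 2) := Submodule.span (ZMod 2) (Y ∩ ↑F) with hS
  -- c ≤ r
  have hcr : c ≤ r := by
    have hne : {d : ℕ | ∃ W : Submodule (ZMod 2) (Fin r → ZMod 2),
        Module.finrank (ZMod 2) W + d = r ∧ ∀ x ∈ Y, x ∉ W}.Nonempty := by
      by_contra h
      rw [Set.not_nonempty_iff_eq_empty] at h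
      rw [critNum, h, Nat.sInf_empty] at hchi
      omega
    have hmem' : critNum Y ∈ {d : ℕ | ∃ W : Submodule (ZMod 2) (Fin r → ZMod 2),
        Module.finrank (ZMod 2) W + d = r ∧ ∀ x ∈ Y, x ∉ W} := Nat.sInf_mem hne
    rw [hchi] at hmem'
    obtain ⟨W0, hW0, -⟩ := hmem'
    omega
  have hSF : S ≤ F := span_le.mpr Set.inter_subset_right
  have hSFr : finrank (ZMod 2) S ≤ finrank (ZMod 2) F := Submodule.finrank_mono hSF
  -- the independent set I₀
  set I0 : Set (Fin r → ZMod 2) := ↑F' ∩ (Y ∩ ↑F) with hI0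
  have hI0F' : I0 ⊆ ↑F' := Set.inter_subset_left
  have hI0card : I0.ncard ≤ finrank (ZMod 2) F' := aux_card_le hI0F' hI0indep
  -- extend I₀ to I of size r - c + 1
  obtain ⟨I, hI0I, hIY, hIindep, hIcard⟩ :=
    aux_extend Y hspan (r - c + 1) (by omega) ((r - c + 1) - I0.ncard) I0
      (fun x hx => hx.2.1) hI0indep (by omega)
  have hrel := hdel I hIY hIindep hIcard
  -- a vector v in S \ F'
  have hF'S : F' < S := lt_of_le_of_ne hF'le (by intro h; rw [h] at hF'rank; omega)
  obtain ⟨v, hvS, hvF'⟩ := SetLike.exists_of_lt hF'S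
  -- functional vanishing on F' but not on v
  obtain ⟨φ, hφv, hφF'⟩ := Submodule.exists_dual_map_eq_bot_of_notMem hvF' inferInstance
  have hkerF' : F' ≤ LinearMap.ker φ := fun x hx => by
    have : φ x ∈ F'.map φ := ⟨x, hx, rfl⟩
    rw [hφF'] at this
    simpa using this
  -- S = F' ⊔ span {v}
  have hSeq : F' ⊔ span (ZMod 2) {v} = S := by
    apply Submodule.eq_of_le_of_finrank_eq
    · exact sup_le hF'le ((span_singleton_le_iff_mem v S).mpr hvS)
    · have h1 : F' < F' ⊔ span (ZMod 2) {v} := by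
        refine lt_of_le_of_ne le_sup_left (fun h => hvF' ?_)
        rw [h]
        exact Submodule.mem_sup_right (Submodule.mem_span_singleton_self v)
      have h2 := Submodule.finrank_lt_finrank_of_lt h1
      have h3 := Submodule.finrank_mono
        (sup_le hF'le ((span_singleton_le_iff_mem v S).mpr hvS))
      omega
  -- key property: points of Y in ker φ ⊓ F are in I₀
  have hkey : ∀ x ∈ Y, x ∈ LinearMap.ker φ ⊓ F → x ∈ I0 := by
    intro x hxY hxW
    have hxS : x ∈ S := subset_span ⟨hxY, hxW.2⟩
    rw [← hSeq] at hxS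
    obtain ⟨f, hf, w, hw, rfl⟩ := Submodule.mem_sup.mp hxS
    obtain ⟨a, rfl⟩ := Submodule.mem_span_singleton.mp hw
    have h1 : φ (f + a • v) = a • φ v := by
      rw [map_add, map_smul, hkerF' hf, zero_add]
    have h2 : φ (f + a • v) = 0 := hxW.1
    have ha : a = 0 := by
      rw [h1, smul_eq_mul] at h2
      rcases mul_eq_zero.mp h2 with h | h
      · exact h
      · exact absurd h hφv
    rw [ha, zero_smul, add_zero]
    rw [ha, zero_smul, add_zero] at hxY hxW
    exact ⟨hf, hxY, hxW.2⟩
  -- dimension facts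
  have hker_dim : r ≤ finrank (ZMod 2) (LinearMap.ker φ) + 1 := by
    have h1 := LinearMap.finrank_range_add_finrank_ker φ
    have h2 : finrank (ZMod 2) (LinearMap.range φ) ≤ 1 := by
      have := Submodule.finrank_le (LinearMap.range φ)
      simpa using this
    have h3 : finrank (ZMod 2) (Fin r → ZMod 2) = r := by simp
    omega
  set H : Submodule (ZMod 2) (Fin r → ZMod 2) := LinearMap.ker φ ⊓ F with hH
  have hHdim : finrank (ZMod 2) F ≤ finrank (ZMod 2) H + 1 := by
    have h1 := Submodule.finrank_sup_add_finrank_inf_eq (LinearMap.ker φ) F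
    rw [← hH] at h1
    have h2 : finrank (ZMod 2) ↥(LinearMap.ker φ ⊔ F) ≤ r := by
      have := Submodule.finrank_le (LinearMap.ker φ ⊔ F)
      simpa using this
    omega
  -- the contradiction
  set V : Submodule (ZMod 2) (Fin r → ZMod 2) := Submodule.span (ZMod 2) (Y \ I) with hV
  set W : Submodule (ZMod 2) (Fin r → ZMod 2) := H ⊓ V with hW
  have hWV : W ≤ V := inf_le_right
  have hWVr : finrank (ZMod 2) W ≤ finrank (ZMod 2) V := Submodule.finrank_mono hWV
  have hWdim : finrank (ZMod 2) H + finrank (ZMod 2) V ≤ finrank (ZMod 2) W + r := by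
    have h1 := Submodule.finrank_sup_add_finrank_inf_eq H V
    rw [← hW] at h1
    have h2 : finrank (ZMod 2) ↥(H ⊔ V) ≤ r := by
      have := Submodule.finrank_le (H ⊔ V)
      simpa using this
    omega
  obtain ⟨c', hc'⟩ : ∃ c', finrank (ZMod 2) W + c' = finrank (ZMod 2) V :=
    ⟨finrank (ZMod 2) V - finrank (ZMod 2) W, by omega⟩
  have hmem : c' ∈ {d : ℕ | ∃ W' : Submodule (ZMod 2) (Fin r → ZMod 2),
      W' ≤ Submodule.span (ZMod 2) (Y \ I) ∧
      Module.finrank (ZMod 2) W' + d = Module.finrank (ZMod 2) (Submodule.span (ZMod 2) (Y \ I)) ∧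
      ∀ x ∈ Y \ I, x ∉ W'} := by
    refine ⟨W, hWV, ?_, ?_⟩
    · rw [← hV]; exact hc'
    · intro x hx hxW
      exact hx.2 (hI0I (hkey x hx.1 hxW.1))
  have hle : c ≤ c' := by
    have := Nat.sInf_le hmem
    rw [show sInf {d : ℕ | ∃ W' : Submodule (ZMod 2) (Fin r → ZMod 2),
      W' ≤ Submodule.span (ZMod 2) (Y \ I) ∧
      Module.finrank (ZMod 2) W' + d = Module.finrank (ZMod 2) (Submodule.span (ZMod 2) (Y \ I)) ∧
      ∀ x ∈ Y \ I, x ∉ W'} = relCritNum (Y \ I) from rfl, hrel] at this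
    exact this
  omega
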